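/- Let x be a decision node with remaining supply t and let P = (x^t, x^{t−1}, …, x^0) be a path from x. If for every s ∈ {1,…,t} and every buyer j we have f_j(x^s) < s, then the final allocation of P is fully efficient: SW(x^0_1 − x^t_1 | x) = OPT(x). Otherwise, letting t̄ = max{ s ∈ {1,…,t} : f_j(x^s) = s for some buyer j }, the efficiency of P is bounded below by the efficiency of its final subpath: SW(x^0_1 − x^t_1 | x)·OPT(x^{t̄}) ≥ SW(x^0_1 − x^{t̄}_1 | x^{t̄})·OPT(x). -/

import Mathlib

open Finset

noncomputable section

/-- The opponent of buyer `i`. -/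
def other (i : Fin 2) : Fin 2 := 1 - i

/-- The standard unit vector of buyer `i`: winning one item moves `x` to `x + e i`. -/
def e (i : Fin 2) : Fin 2 → ℕ := Pi.single i 1

/-- Remaining supply `t(x) = T - x₁ - x₂` at node `x`. -/
def supply (T : ℕ) (x : Fin 2 → ℕ) : ℕ := T - (x 0 + x 1)

/-- `x` is a decision node: `x₁ + x₂ < T`. -/
def IsDecision (T : ℕ) (x : Fin 2 → ℕ) : Prop := x 0 + x 1 < T

/-- Incremental value `v_i(k|x) = v_i(x_i + k)`. -/
def val (v : Fin 2 → ℕ → ℝ) (i : Fin 2) (k : ℕ) (x : Fin 2 → ℕ) : ℝ := v i (x i + k)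

/-- Valuations are nonnegative and weakly decreasing. -/
def Admissible (v : Fin 2 → ℕ → ℝ) : Prop := ∀ i k, 0 ≤ v i k ∧ v i (k + 1) ≤ v i k

/-- Greedy payoff `μ̄_i(k|x) = Σ_{j=1}^k v_i(j|x) - k · v_{-i}(t-k+1|x)`. -/
def gbar (T : ℕ) (v : Fin 2 → ℕ → ℝ) (i : Fin 2) (k : ℕ) (x : Fin 2 → ℕ) : ℝ :=
  (∑ j ∈ Finset.Icc 1 k, val v i j x) - (k : ℝ) * val v (other i) (supply T x - k + 1) x

/-- Greedy utility `μ_i(x) = max_{0 ≤ k ≤ t} μ̄_i(k|x)` (equal to `0` at terminal nodes). -/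
def gu (T : ℕ) (v : Fin 2 → ℕ → ℝ) (i : Fin 2) (x : Fin 2 → ℕ) : ℝ :=
  Finset.sup' (Finset.range (supply T x + 1)) ⟨0, by simp⟩
    (fun k => gbar T v i k x)

/-- Greedy demand `κ_i(x)`: the least `k ∈ {0,…,t}` attaining the greedy utility. -/
def gd (T : ℕ) (v : Fin 2 → ℕ → ℝ) (i : Fin 2) (x : Fin 2 → ℕ) : ℕ :=
  sInf {k | k ≤ supply T x ∧ gbar T v i k x = gu T v i x}

/-- Duopsony factor `f_i(x) = max ({k ∈ {1,…,t} : v_i(k|x) > v_{-i}(t-k+1|x)} ∪ {0})`. -/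
def df (T : ℕ) (v : Fin 2 → ℕ → ℝ) (i : Fin 2) (x : Fin 2 → ℕ) : ℕ :=
  sSup {k | 1 ≤ k ∧ k ≤ supply T x ∧
    val v (other i) (supply T x - k + 1) x < val v i k x}

/-- Baseline price `β_i(x)`. -/
def base (T : ℕ) (v : Fin 2 → ℕ → ℝ) (i : Fin 2) (x : Fin 2 → ℕ) : ℝ :=
  if df T v i x = 0 then val v i 1 x
  else val v (other i) (supply T x - gd T v i x + 1) x

/-- Threshold price `p_i(x) = v_i(1|x) + μ_i(x+e_i) - μ_i(x+e_{-i})`. -/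
def tp (T : ℕ) (v : Fin 2 → ℕ → ℝ) (i : Fin 2) (x : Fin 2 → ℕ) : ℝ :=
  val v i 1 x + gu T v i (x + e i) - gu T v i (x + e (other i))

/-- Social welfare of awarding `k` of the `t` remaining items to buyer 1. -/
def sw (T : ℕ) (v : Fin 2 → ℕ → ℝ) (k : ℕ) (x : Fin 2 → ℕ) : ℝ :=
  (∑ i ∈ Finset.Icc 1 k, val v 0 i x) + (∑ i ∈ Finset.Icc 1 (supply T x - k), val v 1 i x)

/-- Optimal social welfare `OPT(x) = max_{0 ≤ k ≤ t} SW(k|x)`. -/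
def opt (T : ℕ) (v : Fin 2 → ℕ → ℝ) (x : Fin 2 → ℕ) : ℝ :=
  Finset.sup' (Finset.range (supply T x + 1)) ⟨0, by simp⟩
    (fun k => sw T v k x)



lemma vmono (v : Fin 2 → ℕ → ℝ) (hv : Admissible v) (i : Fin 2) {m n : ℕ} (h : m ≤ n) :
    v i n ≤ v i m :=
  antitone_nat_of_succ_le (fun n => (hv i n).2) h

lemma val_nonneg (v : Fin 2 → ℕ → ℝ) (hv : Admissible v) (i : Fin 2) (k : ℕ) (y : Fin 2 → ℕ) :
    0 ≤ val v i k y := (hv i _).1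

lemma df_bdd (T : ℕ) (v : Fin 2 → ℕ → ℝ) (i : Fin 2) (y : Fin 2 → ℕ) :
    BddAbove {k | 1 ≤ k ∧ k ≤ supply T y ∧
      val v (other i) (supply T y - k + 1) y < val v i k y} :=
  ⟨supply T y, fun _ h => h.2.1⟩

lemma df_le_supply (T : ℕ) (v : Fin 2 → ℕ → ℝ) (i : Fin 2) (y : Fin 2 → ℕ) :
    df T v i y ≤ supply T y := by
  unfold df
  by_cases h : {k | 1 ≤ k ∧ k ≤ supply T y ∧
      val v (other i) (supply T y - k + 1) y < val v i k y}.Nonempty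
  · exact csSup_le h (fun _ hm => hm.2.1)
  · rw [Set.not_nonempty_iff_eq_empty.mp h, csSup_empty]
    exact Nat.zero_le _

lemma le_df (T : ℕ) (v : Fin 2 → ℕ → ℝ) (i : Fin 2) (y : Fin 2 → ℕ) {k : ℕ}
    (h1 : 1 ≤ k) (h2 : k ≤ supply T y)
    (h3 : val v (other i) (supply T y - k + 1) y < val v i k y) :
    k ≤ df T v i y :=
  le_csSup (df_bdd T v i y) ⟨h1, h2, h3⟩

lemma df_spec_lt (T : ℕ) (v : Fin 2 → ℕ → ℝ) (i : Fin 2) (y : Fin 2 → ℕ) {k : ℕ}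
    (h1 : 1 ≤ k) (h2 : k ≤ supply T y) (h3 : df T v i y < k) :
    val v i k y ≤ val v (other i) (supply T y - k + 1) y := by
  by_contra h
  exact absurd (le_df T v i y h1 h2 (not_le.mp h)) (not_le.mpr h3)

lemma df_spec_le (T : ℕ) (v : Fin 2 → ℕ → ℝ) (hv : Admissible v) (i : Fin 2) (y : Fin 2 → ℕ)
    {k : ℕ} (h1 : 1 ≤ k) (hk : k ≤ df T v i y) :
    val v (other i) (supply T y - k + 1) y < val v i k y := by
  set S := {k | 1 ≤ k ∧ k ≤ supply T y ∧
      val v (other i) (supply T y - k + 1) y < val v i k y} with hS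
  have hne : S.Nonempty := by
    by_contra h
    rw [Set.not_nonempty_iff_eq_empty] at h
    have : df T v i y = 0 := by unfold df; rw [← hS, h, csSup_empty]; rfl
    omega
  have hmem : df T v i y ∈ S := Nat.sSup_mem hne (df_bdd T v i y)
  obtain ⟨hd1, hd2, hd3⟩ := hmem
  have e1 : v i (y i + df T v i y) ≤ v i (y i + k) :=
    vmono v hv i (by omega)
  have e2 : v (other i) (y (other i) + (supply T y - k + 1)) ≤
      v (other i) (y (other i) + (supply T y - df T v i y + 1)) :=
    vmono v hv (other i) (by omega)
  calc val v (other i) (supply T y - k + 1) y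
      ≤ val v (other i) (supply T y - df T v i y + 1) y := e2
    _ < val v i (df T v i y) y := hd3
    _ ≤ val v i k y := e1

lemma df_sum_le (T : ℕ) (v : Fin 2 → ℕ → ℝ) (hv : Admissible v) (y : Fin 2 → ℕ) :
    df T v 0 y + df T v 1 y ≤ supply T y := by
  by_contra h
  push_neg at h
  have h0 : df T v 0 y ≤ supply T y := df_le_supply T v 0 y
  have h1 : df T v 1 y ≤ supply T y := df_le_supply T v 1 y
  have hg0 : 1 ≤ df T v 0 y := by omega
  have hg1 : 1 ≤ df T v 1 y := by omega
  have m0 := df_spec_le T v hv 0 y hg0 le_rfl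
  have m1 := df_spec_le T v hv 1 y hg1 le_rfl
  have ho0 : other 0 = (1 : Fin 2) := rfl
  have ho1 : other 1 = (0 : Fin 2) := rfl
  rw [ho0] at m0; rw [ho1] at m1
  -- v1(s-f0+1) < v0(f0), v0(s-f1+1) < v1(f1)
  have e1 : val v 1 (df T v 1 y) y ≤ val v 1 (supply T y - df T v 0 y + 1) y :=
    vmono v hv 1 (by omega)
  have e2 : val v 0 (df T v 0 y) y ≤ val v 0 (supply T y - df T v 1 y + 1) y :=
    vmono v hv 0 (by omega)
  linarith

lemma sw_succ (T : ℕ) (v : Fin 2 → ℕ → ℝ) (y : Fin 2 → ℕ) {k : ℕ} (hk : k < supply T y) :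
    sw T v (k + 1) y = sw T v k y + val v 0 (k + 1) y - val v 1 (supply T y - k) y := by
  unfold sw
  have h1 : ∑ i ∈ Finset.Icc 1 (k + 1), val v 0 i y
      = (∑ i ∈ Finset.Icc 1 k, val v 0 i y) + val v 0 (k + 1) y :=
    Finset.sum_Icc_succ_top (by omega) _
  have h2 : supply T y - k = (supply T y - (k + 1)) + 1 := by omega
  have h3 : ∑ i ∈ Finset.Icc 1 (supply T y - k), val v 1 i y
      = (∑ i ∈ Finset.Icc 1 (supply T y - (k+1)), val v 1 i y) + val v 1 (supply T y - k) y := by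
    rw [h2]
    rw [Finset.sum_Icc_succ_top (by omega) _]
  rw [h1, h3]
  ring

lemma sw_mono_up (T : ℕ) (v : Fin 2 → ℕ → ℝ) (hv : Admissible v) (y : Fin 2 → ℕ) :
    ∀ m, m ≤ supply T y - df T v 1 y → ∀ k, k ≤ m → sw T v k y ≤ sw T v m y := by
  intro m
  induction m with
  | zero =>
    intro _ k hk
    have : k = 0 := Nat.le_zero.mp hk
    rw [this]
  | succ m ih =>
    intro hm k hk
    have hf1 : df T v 1 y ≤ supply T y := df_le_supply T v 1 y
    have hms : m < supply T y := by omega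
    have step : sw T v m y ≤ sw T v (m + 1) y := by
      have h1 : (1:ℕ) ≤ supply T y - m := by omega
      have h2 : supply T y - m ≤ supply T y := by omega
      have h3 : df T v 1 y < supply T y - m := by omega
      have := df_spec_lt T v 1 y h1 h2 h3
      have ho1 : other 1 = (0 : Fin 2) := rfl
      rw [ho1] at this
      have h4 : supply T y - (supply T y - m) + 1 = m + 1 := by omega
      rw [h4] at this
      have := sw_succ T v y hms
      linarith
    rcases Nat.lt_succ_iff_lt_or_eq.mp (Nat.lt_succ_of_le hk) with h' | h'
    · exact le_trans (ih (by omega) k (by omega)) step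
    · exact h' ▸ le_refl _

lemma sw_mono_down (T : ℕ) (v : Fin 2 → ℕ → ℝ) (hv : Admissible v) (y : Fin 2 → ℕ) (m : ℕ)
    (hm : df T v 0 y ≤ m) :
    ∀ k, k ≤ supply T y → m ≤ k → sw T v k y ≤ sw T v m y := by
  intro k
  induction k with
  | zero =>
    intro _ hk
    have : m = 0 := Nat.le_zero.mp hk
    rw [this]
  | succ k ih =>
    intro hks hmk
    rcases Nat.lt_succ_iff_lt_or_eq.mp (Nat.lt_succ_of_le hmk) with h' | h'
    · -- m ≤ k, show sw (k+1) ≤ sw k ≤ sw m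
      have step : sw T v (k + 1) y ≤ sw T v k y := by
        have h1 : (1:ℕ) ≤ k + 1 := by omega
        have h2 : k + 1 ≤ supply T y := hks
        have h3 : df T v 0 y < k + 1 := by omega
        have := df_spec_lt T v 0 y h1 h2 h3
        have ho0 : other 0 = (1 : Fin 2) := rfl
        rw [ho0] at this
        have h4 : supply T y - (k + 1) + 1 = supply T y - k := by omega
        rw [h4] at this
        have := sw_succ T v y (show k < supply T y by omega)
        linarith
      exact le_trans step (ih (by omega) (by omega))
    · exact h' ▸ le_refl _

lemma sw_le_opt (T : ℕ) (v : Fin 2 → ℕ → ℝ) (y : Fin 2 → ℕ) {k : ℕ} (hk : k ≤ supply T y) :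
    sw T v k y ≤ opt T v y :=
  Finset.le_sup' (fun k => sw T v k y) (Finset.mem_range.mpr (Nat.lt_succ_of_le hk))

lemma sw_nonneg (T : ℕ) (v : Fin 2 → ℕ → ℝ) (hv : Admissible v) (k : ℕ) (y : Fin 2 → ℕ) :
    0 ≤ sw T v k y := by
  unfold sw
  have h1 : (0:ℝ) ≤ ∑ i ∈ Finset.Icc 1 k, val v 0 i y :=
    Finset.sum_nonneg (fun i _ => val_nonneg v hv 0 i y)
  have h2 : (0:ℝ) ≤ ∑ i ∈ Finset.Icc 1 (supply T y - k), val v 1 i y :=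
    Finset.sum_nonneg (fun i _ => val_nonneg v hv 1 i y)
  linarith

lemma plateau (T : ℕ) (v : Fin 2 → ℕ → ℝ) (hv : Admissible v) (y : Fin 2 → ℕ) {m : ℕ}
    (h0 : df T v 0 y ≤ m) (h1 : m ≤ supply T y - df T v 1 y) :
    sw T v m y = opt T v y := by
  have hms : m ≤ supply T y := le_trans h1 (Nat.sub_le _ _)
  apply le_antisymm (sw_le_opt T v y hms)
  apply Finset.sup'_le
  intro k hk
  rw [Finset.mem_range] at hk
  rcases le_or_gt k m with h | h
  · exact sw_mono_up T v hv y m h1 k h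
  · exact sw_mono_down T v hv y m h0 k (by omega) (le_of_lt h)

lemma sum_Icc_split (f : ℕ → ℝ) (a k : ℕ) :
    ∑ i ∈ Finset.Icc 1 (a + k), f i
      = (∑ i ∈ Finset.Icc 1 a, f i) + ∑ i ∈ Finset.Icc 1 k, f (a + i) := by
  induction k with
  | zero => simp
  | succ k ih =>
    have : a + (k + 1) = (a + k) + 1 := by omega
    rw [this, Finset.sum_Icc_succ_top (by omega) f, ih,
      Finset.sum_Icc_succ_top (show 1 ≤ k + 1 by omega) (fun i => f (a + i)), this]
    ring

-- split lemma
lemma sw_split (T : ℕ) (v : Fin 2 → ℕ → ℝ) (x y : Fin 2 → ℕ) (a b k : ℕ)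
    (hy0 : y 0 = x 0 + a) (hy1 : y 1 = x 1 + b)
    (hsum : a + b + supply T y = supply T x) (hk : k ≤ supply T y) :
    sw T v (a + k) x
      = ((∑ i ∈ Finset.Icc 1 a, val v 0 i x) + ∑ i ∈ Finset.Icc 1 b, val v 1 i x)
        + sw T v k y := by
  unfold sw
  have h1 : ∑ i ∈ Finset.Icc 1 (a + k), val v 0 i x
      = (∑ i ∈ Finset.Icc 1 a, val v 0 i x) + ∑ i ∈ Finset.Icc 1 k, val v 0 (a + i) x :=
    sum_Icc_split _ a k
  have h2 : supply T x - (a + k) = b + (supply T y - k) := by omega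
  have h3 : ∑ i ∈ Finset.Icc 1 (b + (supply T y - k)), val v 1 i x
      = (∑ i ∈ Finset.Icc 1 b, val v 1 i x)
        + ∑ i ∈ Finset.Icc 1 (supply T y - k), val v 1 (b + i) x :=
    sum_Icc_split _ b _
  have h4 : ∀ i, val v 0 (a + i) x = val v 0 i y := by
    intro i
    show v 0 (x 0 + (a + i)) = v 0 (y 0 + i)
    rw [hy0]; congr 1; omega
  have h5 : ∀ i, val v 1 (b + i) x = val v 1 i y := by
    intro i
    show v 1 (x 1 + (b + i)) = v 1 (y 1 + i)
    rw [hy1]; congr 1; omega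
  rw [h1, h2, h3]
  simp only [h4, h5]
  ring

/-- Efficiency along a path: either full efficiency, or the efficiency is bounded
below by the efficiency of the final subpath starting at the last node where some
buyer is a strict monopsonist. -/
theorem stmt15 (T : ℕ) (v : Fin 2 → ℕ → ℝ) (hv : Admissible v)
    (x : Fin 2 → ℕ) (hx : IsDecision T x)
    (P : ℕ → (Fin 2 → ℕ))
    (hPtop : P (supply T x) = x)
    (hPstep : ∀ s, 1 ≤ s → s ≤ supply T x → ∃ j : Fin 2, P (s - 1) = P s + e j) :
    ((∀ s, 1 ≤ s → s ≤ supply T x → ∀ j : Fin 2, df T v j (P s) < s) →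
      sw T v (P 0 0 - x 0) x = opt T v x) ∧
    ((∃ s, 1 ≤ s ∧ s ≤ supply T x ∧ ∃ j : Fin 2, df T v j (P s) = s) →
      sw T v (P 0 0 - P (sSup {s | 1 ≤ s ∧ s ≤ supply T x ∧
            ∃ j : Fin 2, df T v j (P s) = s}) 0)
          (P (sSup {s | 1 ≤ s ∧ s ≤ supply T x ∧ ∃ j : Fin 2, df T v j (P s) = s}))
        * opt T v x
      ≤ sw T v (P 0 0 - x 0) x
        * opt T v (P (sSup {s | 1 ≤ s ∧ s ≤ supply T x ∧
            ∃ j : Fin 2, df T v j (P s) = s}))) := by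
  set t := supply T x with ht
  have htT : t = T - (x 0 + x 1) := by rw [ht]; rfl
  have hxT : x 0 + x 1 < T := hx
  have ht1 : 1 ≤ t := by omega
  -- basic path structure
  have keyd : ∀ d, d ≤ t → (x 0 ≤ P (t - d) 0 ∧ x 1 ≤ P (t - d) 1 ∧
      P (t - d) 0 + P (t - d) 1 = x 0 + x 1 + d) := by
    intro d
    induction d with
    | zero =>
      intro _
      rw [Nat.sub_zero, hPtop]
      exact ⟨le_rfl, le_rfl, by omega⟩
    | succ d ih =>
      intro hd
      obtain ⟨h0, h1, hs⟩ := ih (by omega)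
      obtain ⟨j, hj⟩ := hPstep (t - d) (by omega) (by omega)
      have he : e j 0 + e j 1 = 1 := by fin_cases j <;> simp [e, Pi.single_apply]
      have hj0 : P (t - d - 1) 0 = P (t - d) 0 + e j 0 := by rw [hj]; rfl
      have hj1 : P (t - d - 1) 1 = P (t - d) 1 + e j 1 := by rw [hj]; rfl
      have hidx : t - (d + 1) = t - d - 1 := by omega
      rw [hidx]
      omega
  have key : ∀ s, s ≤ t → (x 0 ≤ P s 0 ∧ x 1 ≤ P s 1 ∧
      P s 0 + P s 1 = x 0 + x 1 + (t - s)) := by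
    intro s hs
    have := keyd (t - s) (by omega)
    rwa [show t - (t - s) = s from by omega] at this
  have hsupp : ∀ s, s ≤ t → supply T (P s) = s := by
    intro s hs
    obtain ⟨h0, h1, hsum⟩ := key s hs
    show T - (P s 0 + P s 1) = s
    omega
  have step1 : ∀ s, 1 ≤ s → s ≤ t → ∀ i : Fin 2, P s i ≤ P (s - 1) i := by
    intro s h1 h2 i
    obtain ⟨j, hj⟩ := hPstep s h1 h2
    rw [hj]
    show P s i ≤ P s i + e j i
    exact Nat.le_add_right _ _
  have mono : ∀ n : ℕ, ∀ s', s' + n ≤ t → ∀ i : Fin 2, P (s' + n) i ≤ P s' i := by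
    intro n
    induction n with
    | zero => intro s' _ i; rw [Nat.add_zero]
    | succ n ih =>
      intro s' h i
      have h1 := step1 (s' + n + 1) (by omega) (by omega) i
      rw [show s' + n + 1 - 1 = s' + n from by omega] at h1
      calc P (s' + (n + 1)) i = P (s' + n + 1) i := by
            rw [show s' + (n + 1) = s' + n + 1 from by omega]
        _ ≤ P (s' + n) i := h1
        _ ≤ P s' i := ih s' (by omega) i
  have monole : ∀ s' s, s' ≤ s → s ≤ t → ∀ i : Fin 2, P s i ≤ P s' i := by
    intro s' s hss hst i
    have := mono (s - s') s' (by omega) i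
    rwa [show s' + (s - s') = s from by omega] at this
  -- component facts for a generic buyer i
  have hcomp : ∀ s, s ≤ t → ∀ i : Fin 2, x i ≤ P s i ∧ x (other i) ≤ P s (other i) ∧
      (P s i - x i) + (P s (other i) - x (other i)) = t - s := by
    intro s hs i
    obtain ⟨h0, h1, hsum⟩ := key s hs
    have hi : i = 0 ∨ i = 1 := by
      have h2 : ∀ j : Fin 2, j = 0 ∨ j = 1 := by decide
      exact h2 i
    rcases hi with rfl | rfl
    · simp only [show other (0 : Fin 2) = 1 from rfl]
      exact ⟨h0, h1, by omega⟩
    · simp only [show other (1 : Fin 2) = 0 from rfl]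
      exact ⟨h1, h0, by omega⟩
  -- translation bound for the duopsony factor along the path
  have C1 : ∀ s, 1 ≤ s → s ≤ t → ∀ i : Fin 2, df T v i (P s) < s →
      df T v i x ≤ (P s i - x i) + df T v i (P s) := by
    intro s h1 h2 i hlt
    by_contra hcon
    push_neg at hcon
    obtain ⟨hxi, hxoi, hsum'⟩ := hcomp s h2 i
    have hft : df T v i x ≤ t := by rw [ht]; exact df_le_supply T v i x
    have hak1 : 1 ≤ (P s i - x i) + (df T v i (P s) + 1) := by omega
    have hak2 : (P s i - x i) + (df T v i (P s) + 1) ≤ df T v i x := by omega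
    have hmem := df_spec_le T v hv i x hak1 hak2
    rw [← ht] at hmem
    have tr1 : val v i ((P s i - x i) + (df T v i (P s) + 1)) x
        = val v i (df T v i (P s) + 1) (P s) := by
      show v i (x i + ((P s i - x i) + (df T v i (P s) + 1)))
          = v i (P s i + (df T v i (P s) + 1))
      congr 1
      omega
    have tr2 : val v (other i) (t - ((P s i - x i) + (df T v i (P s) + 1)) + 1) x
        = val v (other i) (s - (df T v i (P s) + 1) + 1) (P s) := by
      show v (other i) (x (other i) + (t - ((P s i - x i) + (df T v i (P s) + 1)) + 1))
          = v (other i) (P s (other i) + (s - (df T v i (P s) + 1) + 1))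
      congr 1
      omega
    rw [tr1, tr2] at hmem
    have hle : df T v i (P s) + 1 ≤ df T v i (P s) :=
      le_df T v i (P s) (by omega) (by rw [hsupp s h2]; omega)
        (by rw [hsupp s h2]; exact hmem)
    omega
  constructor
  · -- Part 1: full efficiency
    intro hyp
    have hd1 : ∀ i : Fin 2, df T v i (P 1) = 0 := by
      intro i
      have := hyp 1 le_rfl ht1 i
      omega
    have hb : ∀ i : Fin 2, df T v i x ≤ P 0 i - x i := by
      intro i
      have hC := C1 1 le_rfl ht1 i (by rw [hd1 i]; omega)
      rw [hd1 i] at hC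
      have hm := monole 0 1 (by omega) ht1 i
      omega
    obtain ⟨k0le0, k0le1, k0sum⟩ := key 0 (by omega)
    have h0' := hb 0
    have h1' := hb 1
    exact plateau T v hv x h0' (by rw [← ht]; omega)
  · -- Part 2
    intro hex
    set S : Set ℕ := {s | 1 ≤ s ∧ s ≤ t ∧ ∃ j : Fin 2, df T v j (P s) = s} with hS
    set tb := sSup S with htb
    have hSne : S.Nonempty := hex
    have hSbdd : BddAbove S := ⟨t, fun s hs => hs.2.1⟩
    have htbmem : tb ∈ S := by rw [htb]; exact Nat.sSup_mem hSne hSbdd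
    obtain ⟨htb1, htbt, j₀, hj₀⟩ := htbmem
    have hnottop : ∀ s, tb < s → s ≤ t → ∀ i : Fin 2, df T v i (P s) < s := by
      intro s hlt hle i
      have hne : df T v i (P s) ≠ s := by
        intro hcon
        have hmem : s ∈ S := ⟨by omega, hle, i, hcon⟩
        have := le_csSup hSbdd hmem
        rw [← htb] at this
        omega
      have := df_le_supply T v i (P s)
      rw [hsupp s hle] at this
      omega
    have hbnd : ∀ i : Fin 2, df T v i x ≤ (P tb i - x i) + tb := by
      intro i
      rcases eq_or_lt_of_le htbt with heq | hlt
      · have := df_le_supply T v i x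
        rw [← ht] at this
        omega
      · have hdflt := hnottop (tb + 1) (by omega) (by omega) i
        have hC := C1 (tb + 1) (by omega) (by omega) i hdflt
        have hm := monole tb (tb + 1) (by omega) (by omega) i
        omega
    obtain ⟨ha0, ha1, hsumtb⟩ := key tb htbt
    obtain ⟨hz0, hz1, hsum0⟩ := key 0 (by omega)
    have hm0 := monole 0 tb (by omega) htbt 0
    have hm1 := monole 0 tb (by omega) htbt 1
    have hsy : supply T (P tb) = tb := hsupp tb htbt
    have hsum_df := df_sum_le T v hv x
    rw [← ht] at hsum_df
    have hb0 := hbnd 0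
    have hb1 := hbnd 1
    have hsplit := sw_split T v x (P tb) (P tb 0 - x 0) (P tb 1 - x 1)
      (P 0 0 - P tb 0) (by omega) (by omega) (by rw [hsy, ← ht]; omega)
      (by rw [hsy]; omega)
    rw [show (P tb 0 - x 0) + (P 0 0 - P tb 0) = P 0 0 - x 0 from by omega] at hsplit
    have hmex : ∃ m, df T v 0 x ≤ m ∧ (P tb 0 - x 0) ≤ m ∧
        m ≤ (P tb 0 - x 0) + tb ∧ m ≤ t - df T v 1 x := by
      by_cases hcase : df T v 0 x ≤ P tb 0 - x 0
      · exact ⟨P tb 0 - x 0, hcase, le_rfl, by omega, by omega⟩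
      · exact ⟨df T v 0 x, le_rfl, by omega, by omega, by omega⟩
    obtain ⟨m, hm0', hma, hmup, hm1'⟩ := hmex
    have hplat : sw T v m x = opt T v x := plateau T v hv x hm0' (by rw [← ht]; omega)
    have hsplit2 := sw_split T v x (P tb) (P tb 0 - x 0) (P tb 1 - x 1)
      (m - (P tb 0 - x 0)) (by omega) (by omega) (by rw [hsy, ← ht]; omega)
      (by rw [hsy]; omega)
    rw [show (P tb 0 - x 0) + (m - (P tb 0 - x 0)) = m from by omega] at hsplit2
    have hle2 : sw T v (m - (P tb 0 - x 0)) (P tb) ≤ opt T v (P tb) :=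
      sw_le_opt T v (P tb) (by rw [hsy]; omega)
    have hoptle : opt T v x ≤
        ((∑ i ∈ Finset.Icc 1 (P tb 0 - x 0), val v 0 i x)
          + ∑ i ∈ Finset.Icc 1 (P tb 1 - x 1), val v 1 i x) + opt T v (P tb) := by
      rw [← hplat, hsplit2]
      linarith
    have hswle : sw T v (P 0 0 - P tb 0) (P tb) ≤ opt T v (P tb) :=
      sw_le_opt T v (P tb) (by rw [hsy]; omega)
    have hsw0 : 0 ≤ sw T v (P 0 0 - P tb 0) (P tb) := sw_nonneg T v hv _ _
    have hC0 : 0 ≤ (∑ i ∈ Finset.Icc 1 (P tb 0 - x 0), val v 0 i x)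
        + ∑ i ∈ Finset.Icc 1 (P tb 1 - x 1), val v 1 i x := by
      have h1 : (0:ℝ) ≤ ∑ i ∈ Finset.Icc 1 (P tb 0 - x 0), val v 0 i x :=
        Finset.sum_nonneg (fun i _ => val_nonneg v hv 0 i x)
      have h2 : (0:ℝ) ≤ ∑ i ∈ Finset.Icc 1 (P tb 1 - x 1), val v 1 i x :=
        Finset.sum_nonneg (fun i _ => val_nonneg v hv 1 i x)
      linarith
    rw [hsplit]
    nlinarith [mul_le_mul_of_nonneg_left hoptle hsw0,
      mul_le_mul_of_nonneg_right hswle hC0]
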